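/- Let s ∈ ℂ with Im s < 0 and let λ ∈ ℝ. Then the double integral 2 ∫_{ℝ²} e^{i s τ} e^{−i λ t} e^{−π e^{τ} ( e^{t} + e^{−t} )} dτ dt converges absolutely and equals π^{−(is−iλ)/2} Γ( (is − iλ)/2 ) · π^{−(is+iλ)/2} Γ( (is + iλ)/2 ). -/

import Mathlib

open MeasureTheory

namespace SO2Aux

open Complex Set

/-- The exponential-substitution Gamma integral: for `0 < re a`,
`∫ u, e^{a u} e^{-π e^u} du = π^{-a} Γ(a)`. -/
lemma exp_gamma (a : ℂ) (ha : 0 < a.re) :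
    Integrable (fun u : ℝ => Complex.exp (a * u) * (Real.exp (-(Real.pi * Real.exp u)) : ℂ)) ∧
    ∫ u : ℝ, Complex.exp (a * u) * (Real.exp (-(Real.pi * Real.exp u)) : ℂ)
      = (Real.pi : ℂ) ^ (-a) * Complex.Gamma a := by
  set g : ℝ → ℂ := fun x => (x : ℂ) ^ (a - 1) * Complex.exp (-(Real.pi * x)) with hgdef
  have hπ : (0:ℝ) < Real.pi := Real.pi_pos
  have hπc : ((Real.pi : ℂ)) ^ (a - 1) ≠ 0 := by
    rw [Ne, cpow_eq_zero_iff, not_and_or]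
    exact Or.inl (ofReal_ne_zero.mpr hπ.ne')
  have hg : IntegrableOn g (Ioi 0) := by
    have h0 := Complex.GammaIntegral_convergent ha
    rw [← mul_zero Real.pi, ← integrableOn_Ioi_comp_mul_left_iff _ _ hπ] at h0
    refine IntegrableOn.congr_fun (h0.const_mul ((1 : ℂ) / (Real.pi : ℂ) ^ (a - 1)))
      (fun t ht => ?_) measurableSet_Ioi
    have ht' : (0:ℝ) < t := ht
    simp only [hgdef]
    rw [ofReal_mul, mul_cpow_ofReal_nonneg hπ.le ht'.le]
    push_cast
    field_simp
  have himg : Real.exp '' univ = Ioi 0 := by rw [image_univ, Real.range_exp]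
  have hderiv : ∀ x ∈ (univ : Set ℝ), HasDerivWithinAt Real.exp (Real.exp x) univ x :=
    fun x _ => (Real.hasDerivAt_exp x).hasDerivWithinAt
  have hinj : InjOn Real.exp univ := Real.exp_injective.injOn
  have hps : ∀ u : ℝ, |Real.exp u| • g (Real.exp u)
      = Complex.exp (a * u) * (Real.exp (-(Real.pi * Real.exp u)) : ℂ) := by
    intro u
    have hpos := Real.exp_pos u
    rw [abs_of_pos hpos]
    simp only [hgdef]
    rw [Complex.real_smul]
    have hlog : ((Real.exp u : ℝ) : ℂ) ^ (a - 1) = Complex.exp ((a - 1) * u) := by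
      rw [Complex.cpow_def_of_ne_zero (by exact_mod_cast hpos.ne'),
        ← Complex.ofReal_log hpos.le, Real.log_exp, mul_comm]
    rw [hlog, ← mul_assoc]
    have h2 : ((Real.exp u : ℝ) : ℂ) * Complex.exp ((a - 1) * u) = Complex.exp (a * u) := by
      rw [Complex.ofReal_exp, ← Complex.exp_add]
      congr 1
      ring
    rw [h2]
    congr 1
    push_cast
    ring_nf
  have hiff := integrableOn_image_iff_integrableOn_abs_deriv_smul MeasurableSet.univ hderiv hinj g
  rw [himg] at hiff
  have heq := integral_image_eq_integral_abs_deriv_smul MeasurableSet.univ hderiv hinj g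
  rw [himg] at heq
  have hint : Integrable
      (fun u : ℝ => Complex.exp (a * u) * (Real.exp (-(Real.pi * Real.exp u)) : ℂ)) := by
    rw [← integrableOn_univ]
    exact (hiff.mp hg).congr_fun (fun u _ => hps u) MeasurableSet.univ
  refine ⟨hint, ?_⟩
  have hval : ∫ x : ℝ in Ioi 0, g x = (1 / (Real.pi : ℂ)) ^ a * Complex.Gamma a := by
    simpa only [hgdef, ofReal_mul] using integral_cpow_mul_exp_neg_mul_Ioi ha hπ
  have hfin : ((1 : ℂ) / (Real.pi : ℂ)) ^ a = (Real.pi : ℂ) ^ (-a) := by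
    rw [one_div, inv_cpow _ _ (by rw [arg_ofReal_of_nonneg hπ.le]; exact Real.pi_pos.ne),
      ← cpow_neg]
  calc ∫ u : ℝ, Complex.exp (a * u) * (Real.exp (-(Real.pi * Real.exp u)) : ℂ)
      = ∫ u : ℝ in univ, |Real.exp u| • g (Real.exp u) := by
        rw [setIntegral_univ]
        exact integral_congr_ae (Filter.Eventually.of_forall fun u => (hps u).symm)
    _ = ∫ x : ℝ in Ioi 0, g x := heq.symm
    _ = (Real.pi : ℂ) ^ (-a) * Complex.Gamma a := by rw [hval, hfin]

/-- The linear map `(τ, t) ↦ (τ + t, τ - t)`. -/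
noncomputable def Tlin : (ℝ × ℝ) →ₗ[ℝ] ℝ × ℝ :=
  Matrix.toLin (Module.Basis.finTwoProd ℝ) (Module.Basis.finTwoProd ℝ) !![1, 1; 1, -1]

lemma Tlin_apply (p : ℝ × ℝ) : Tlin p = (p.1 + p.2, p.1 - p.2) := by
  simp [Tlin, Matrix.toLin_finTwoProd_apply]
  ring

lemma Tlin_det : LinearMap.det Tlin = -2 := by
  rw [Tlin, LinearMap.det_toLin, Matrix.det_fin_two_of]
  norm_num

/-- `Tlin` as a linear equivalence. -/
noncomputable def Tequiv : (ℝ × ℝ) ≃ₗ[ℝ] (ℝ × ℝ) :=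
  LinearEquiv.ofLinear Tlin ((1 / 2 : ℝ) • Tlin)
    (by
      apply LinearMap.ext
      intro p
      simp only [LinearMap.comp_apply, LinearMap.smul_apply, LinearMap.id_apply, Tlin_apply,
        Prod.smul_mk, smul_eq_mul]
      exact Prod.ext (by ring) (by ring))
    (by
      apply LinearMap.ext
      intro p
      simp only [LinearMap.comp_apply, LinearMap.smul_apply, LinearMap.id_apply, Tlin_apply,
        Prod.smul_mk, smul_eq_mul]
      exact Prod.ext (by ring) (by ring))

end SO2Aux

open SO2Aux Complex Set

/-- The `SO₂` eigenvalue computation: for `Im s < 0` and `λ ∈ ℝ`, the double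
integral `2 ∫_{ℝ²} e^{isτ} e^{−iλt} e^{−π e^{τ}(e^{t}+e^{−t})} dτ dt` converges
absolutely and equals the local Archimedean `L`-factor
`π^{−(is−iλ)/2} Γ((is−iλ)/2) · π^{−(is+iλ)/2} Γ((is+iλ)/2)`. -/
theorem SO2_baxter_double_integral (s : ℂ) (hs : s.im < 0) (lam : ℝ) :
    Integrable (fun p : ℝ × ℝ =>
      Complex.exp (Complex.I * s * p.1) * Complex.exp (-Complex.I * lam * p.2) *
        Real.exp (-Real.pi * Real.exp p.1 * (Real.exp p.2 + Real.exp (-p.2)))) ∧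
    2 * (∫ p : ℝ × ℝ,
        Complex.exp (Complex.I * s * p.1) * Complex.exp (-Complex.I * lam * p.2) *
          Real.exp (-Real.pi * Real.exp p.1 * (Real.exp p.2 + Real.exp (-p.2))))
    = (Real.pi : ℂ) ^ (-(Complex.I * s - Complex.I * lam)/2) *
        Complex.Gamma ((Complex.I * s - Complex.I * lam)/2) *
      ((Real.pi : ℂ) ^ (-(Complex.I * s + Complex.I * lam)/2) *
        Complex.Gamma ((Complex.I * s + Complex.I * lam)/2)) := by
  have ha : 0 < ((Complex.I * s - Complex.I * lam) / 2).re := by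
    simp [Complex.div_re, Complex.mul_re, Complex.sub_re, Complex.normSq_apply]
    linarith
  have hb : 0 < ((Complex.I * s + Complex.I * lam) / 2).re := by
    simp [Complex.div_re, Complex.add_re, Complex.mul_re, Complex.normSq_apply]
    linarith
  obtain ⟨hFa, hIa⟩ := exp_gamma ((Complex.I * s - Complex.I * lam) / 2) ha
  obtain ⟨hFb, hIb⟩ := exp_gamma ((Complex.I * s + Complex.I * lam) / 2) hb
  set a : ℂ := (Complex.I * s - Complex.I * lam) / 2 with hadef
  set b : ℂ := (Complex.I * s + Complex.I * lam) / 2 with hbdef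
  set F : ℝ → ℂ := fun u => Complex.exp (a * u) * (Real.exp (-(Real.pi * Real.exp u)) : ℂ)
    with hFdef
  set G : ℝ → ℂ := fun u => Complex.exp (b * u) * (Real.exp (-(Real.pi * Real.exp u)) : ℂ)
    with hGdef
  have hP : Integrable (fun q : ℝ × ℝ => F q.1 * G q.2) := by
    rw [MeasureTheory.Measure.volume_eq_prod]
    exact hFa.mul_prod hFb
  have hPval : ∫ q : ℝ × ℝ, F q.1 * G q.2
      = ((Real.pi : ℂ) ^ (-a) * Complex.Gamma a) * ((Real.pi : ℂ) ^ (-b) * Complex.Gamma b) := by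
    rw [MeasureTheory.Measure.volume_eq_prod, integral_prod_mul, hIa, hIb]
  -- the measurable equivalence (τ, t) ↦ (τ + t, τ - t)
  set e : (ℝ × ℝ) ≃ᵐ (ℝ × ℝ) :=
    Tequiv.toContinuousLinearEquiv.toHomeomorph.toMeasurableEquiv with hedef
  have he : ∀ p : ℝ × ℝ, e p = (p.1 + p.2, p.1 - p.2) := fun p => Tlin_apply p
  have hmap : Measure.map e (volume : Measure (ℝ × ℝ))
      = ENNReal.ofReal (1 / 2 : ℝ) • volume := by
    have h := Measure.map_linearMap_addHaar_eq_smul_addHaar (volume : Measure (ℝ × ℝ))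
      (f := Tlin) (by rw [Tlin_det]; norm_num)
    rw [Tlin_det] at h
    have hco : ⇑e = ⇑Tlin := rfl
    rw [hco, h, show |((-2:ℝ))⁻¹| = (1/2 : ℝ) by norm_num]
  have key : ∀ p : ℝ × ℝ,
      Complex.exp (Complex.I * s * p.1) * Complex.exp (-Complex.I * lam * p.2) *
        (Real.exp (-Real.pi * Real.exp p.1 * (Real.exp p.2 + Real.exp (-p.2))) : ℂ)
      = F (e p).1 * G (e p).2 := by
    intro p
    rw [he p]
    simp only [hFdef, hGdef]
    have E1 : Real.exp (p.1 + p.2) = Real.exp p.1 * Real.exp p.2 := Real.exp_add _ _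
    have E2 : Real.exp (p.1 - p.2) = Real.exp p.1 * Real.exp (-p.2) := by
      rw [← Real.exp_add]; ring_nf
    simp only [E1, E2]
    simp only [Complex.ofReal_exp, ← Complex.exp_add]
    congr 1
    rw [hadef, hbdef]
    push_cast
    ring
  have hfun : (fun p : ℝ × ℝ =>
      Complex.exp (Complex.I * s * p.1) * Complex.exp (-Complex.I * lam * p.2) *
        (Real.exp (-Real.pi * Real.exp p.1 * (Real.exp p.2 + Real.exp (-p.2))) : ℂ))
      = (fun q : ℝ × ℝ => F q.1 * G q.2) ∘ e := funext key
  have hInt : Integrable ((fun q : ℝ × ℝ => F q.1 * G q.2) ∘ e) volume := by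
    rw [← MeasureTheory.integrable_map_equiv e, hmap]
    exact (integrable_smul_measure (by norm_num) ENNReal.ofReal_ne_top).2 hP
  have h2 : ∫ p : ℝ × ℝ, ((fun q : ℝ × ℝ => F q.1 * G q.2) ∘ e) p
      = ((1 : ℝ) / 2) • ∫ q : ℝ × ℝ, F q.1 * G q.2 := by
    simp only [Function.comp]
    rw [← MeasureTheory.integral_map_equiv e (fun q : ℝ × ℝ => F q.1 * G q.2)]
    rw [hmap, integral_smul_measure, ENNReal.toReal_ofReal (by norm_num)]
  constructor
  · rw [hfun] at *; exact hInt
  · rw [hfun, h2, Complex.real_smul, hPval]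
    rw [show (-(Complex.I * s - Complex.I * ↑lam)) / 2 = -a by rw [hadef]; ring,
      show (-(Complex.I * s + Complex.I * ↑lam)) / 2 = -b by rw [hbdef]; ring]
    push_cast
    ring
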